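/- arXiv:1706.00544 — 3 statements merged into one kernel-verified Lean document; each statement's English description precedes it below -/
import Mathlib

section
/- Let n ≥ 2, let L be a real symmetric positive semidefinite n×n matrix with eigenvalues 0 = λ₁ ≤ λ₂ ≤ … ≤ λₙ and orthonormal eigenvectors v₁, …, vₙ where v₁ = (1/√n)·1ₙ, let α > 0 and H = (I + αL)⁻¹. Suppose the noise covariance is Σ = Σᵢ₌₁ⁿ σᵢ² vᵢvᵢᵀ with σᵢ ≥ 0 (diagonal in the eigenbasis of L). Then for every x* ∈ ℝⁿ, the mean squared error MSE(α) = ‖(H − I)x*‖₂² + trace(H²Σ) satisfies MSE(α) = Σᵢ₌₂ⁿ qᵢ² (vᵢᵀ x̄*)² + Σᵢ₌₁ⁿ hᵢ² σᵢ², where x̄* = x* − ((1ₙᵀx*)/n)·1ₙ, hᵢ = 1/(1 + αλᵢ), and qᵢ = 1/(1 + 1/(αλᵢ)). -/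
open Matrix

/-- exact MSE decomposition
`MSE(α) = Σᵢ₌₂ⁿ qᵢ² (vᵢᵀ x̄*)² + Σᵢ₌₁ⁿ hᵢ² σᵢ²` when the noise covariance is
diagonal in the eigenbasis of `L`. -/
theorem stmt_6 (n : ℕ) [NeZero n] (hn : 2 ≤ n)
    (L : Matrix (Fin n) (Fin n) ℝ) (hL : L.IsSymm)
    (hpsd : ∀ x : Fin n → ℝ, 0 ≤ x ⬝ᵥ L.mulVec x)
    (ev : Fin n → ℝ) (v : Fin n → Fin n → ℝ)
    (hev0 : ev 0 = 0) (hmono : Monotone ev)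
    (heig : ∀ i, L.mulVec (v i) = ev i • v i)
    (horth : ∀ i j, v i ⬝ᵥ v j = if i = j then (1 : ℝ) else 0)
    (hv0 : v 0 = fun _ => 1 / Real.sqrt n)
    (α : ℝ) (hα : 0 < α)
    (σ : Fin n → ℝ) (hσ : ∀ i, 0 ≤ σ i) (xs : Fin n → ℝ) :
    (((1 + α • L)⁻¹ - 1).mulVec xs) ⬝ᵥ (((1 + α • L)⁻¹ - 1).mulVec xs)
      + (((1 + α • L)⁻¹ ^ 2) * (∑ i, σ i ^ 2 • vecMulVec (v i) (v i))).trace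
    = (∑ i ∈ Finset.univ.erase 0,
        (1 - 1 / (1 + α * ev i)) ^ 2 *
          (v i ⬝ᵥ (xs - ((∑ j, xs j) / (n : ℝ)) • fun _ => (1 : ℝ))) ^ 2)
      + ∑ i, (1 / (1 + α * ev i)) ^ 2 * σ i ^ 2 := by
  classical
  set V : Matrix (Fin n) (Fin n) ℝ := Matrix.of v with hV
  have hVVt : V * Vᵀ = 1 := by
    ext i j
    simpa [Matrix.mul_apply, Matrix.one_apply, dotProduct, hV] using horth i j
  have hVtV : Vᵀ * V = 1 := mul_eq_one_comm.mp hVVt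
  have hevnn : ∀ i, 0 ≤ ev i := fun i => hev0 ▸ hmono (Fin.zero_le (n := n) i)
  have hpos : ∀ i, 0 < 1 + α * ev i := by
    intro i
    have := mul_nonneg hα.le (hevnn i)
    linarith
  -- conjugation product lemma
  have key : ∀ d e : Fin n → ℝ,
      (Vᵀ * Matrix.diagonal d * V) * (Vᵀ * Matrix.diagonal e * V)
        = Vᵀ * Matrix.diagonal (fun i => d i * e i) * V := by
    intro d e
    calc (Vᵀ * Matrix.diagonal d * V) * (Vᵀ * Matrix.diagonal e * V)
        = Vᵀ * Matrix.diagonal d * ((V * Vᵀ) * (Matrix.diagonal e * V)) := by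
          simp only [Matrix.mul_assoc]
      _ = Vᵀ * (Matrix.diagonal d * Matrix.diagonal e) * V := by
          rw [hVVt, Matrix.one_mul]; simp only [Matrix.mul_assoc]
      _ = Vᵀ * Matrix.diagonal (fun i => d i * e i) * V := by
          rw [Matrix.diagonal_mul_diagonal]
  -- diagonalization of L
  have hLV : L * Vᵀ = Vᵀ * Matrix.diagonal ev := by
    ext i j
    have h1 := congrFun (heig j) i
    simp only [Matrix.mulVec, dotProduct, Pi.smul_apply, smul_eq_mul] at h1
    rw [Matrix.mul_diagonal]
    simpa [Matrix.mul_apply, hV, Matrix.transpose_apply, mul_comm] using h1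
  have hL' : L = Vᵀ * Matrix.diagonal ev * V := by
    calc L = L * (Vᵀ * V) := by rw [hVtV, Matrix.mul_one]
      _ = (L * Vᵀ) * V := by rw [Matrix.mul_assoc]
      _ = Vᵀ * Matrix.diagonal ev * V := by rw [hLV]
  have hM : (1 : Matrix (Fin n) (Fin n) ℝ) + α • L
      = Vᵀ * Matrix.diagonal (fun i => 1 + α * ev i) * V := by
    have hd : Matrix.diagonal (fun i => 1 + α * ev i)
        = 1 + α • Matrix.diagonal ev := by
      ext i j
      by_cases h : i = j <;> simp [Matrix.diagonal_apply, h, Matrix.one_apply]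
    rw [hd, Matrix.mul_add, Matrix.add_mul, Matrix.mul_one, hVtV, hL']
    congr 1
    rw [Matrix.mul_smul, Matrix.smul_mul]
  set h : Fin n → ℝ := fun i => 1 / (1 + α * ev i) with hh
  have hinv : (1 + α • L)⁻¹ = Vᵀ * Matrix.diagonal h * V := by
    apply Matrix.inv_eq_right_inv
    rw [hM, key]
    have : (fun i => (1 + α * ev i) * h i) = fun _ => (1 : ℝ) := by
      funext i
      simp only [hh]
      field_simp [hh, (hpos i).ne']
    rw [this, Matrix.diagonal_one, Matrix.mul_one, hVtV]
  -- quadratic form lemma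
  have quad : ∀ (d : Fin n → ℝ) (x : Fin n → ℝ),
      x ⬝ᵥ (Vᵀ * Matrix.diagonal d * V).mulVec x = ∑ i, d i * (v i ⬝ᵥ x) ^ 2 := by
    intro d x
    have hVx : V.mulVec x = fun i => v i ⬝ᵥ x := rfl
    have hDx : (Matrix.diagonal d).mulVec (fun i => v i ⬝ᵥ x)
        = fun i => d i * (v i ⬝ᵥ x) := by
      funext i
      simp [Matrix.mulVec, dotProduct, Matrix.diagonal_apply, Finset.sum_ite_eq]
    rw [← Matrix.mulVec_mulVec, ← Matrix.mulVec_mulVec, hVx, hDx,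
      Matrix.dotProduct_mulVec, Matrix.vecMul_transpose, hVx]
    simp only [dotProduct]
    refine Finset.sum_congr rfl fun i _ => by ring
  -- the bias term
  have hA : (1 + α • L)⁻¹ - 1 = Vᵀ * Matrix.diagonal (fun i => h i - 1) * V := by
    have hd : Matrix.diagonal (fun i => h i - 1) = Matrix.diagonal h - 1 := by
      ext i j
      by_cases hij : i = j <;> simp [Matrix.diagonal_apply, hij, Matrix.one_apply]
    rw [hinv, hd, Matrix.mul_sub, Matrix.sub_mul, Matrix.mul_one, hVtV]
  have hbias : (((1 + α • L)⁻¹ - 1).mulVec xs) ⬝ᵥ (((1 + α • L)⁻¹ - 1).mulVec xs)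
      = ∑ i, ((h i - 1) * (h i - 1)) * (v i ⬝ᵥ xs) ^ 2 := by
    set A := (1 + α • L)⁻¹ - 1 with hAdef
    have hsym : Aᵀ = A := by
      rw [hA]
      simp [Matrix.transpose_mul, Matrix.diagonal_transpose, Matrix.mul_assoc]
    calc A.mulVec xs ⬝ᵥ A.mulVec xs
        = (A.mulVec xs ᵥ* A) ⬝ᵥ xs := by rw [← Matrix.dotProduct_mulVec]
      _ = (Aᵀ.mulVec (A.mulVec xs)) ⬝ᵥ xs := by rw [Matrix.mulVec_transpose]
      _ = xs ⬝ᵥ ((Aᵀ * A).mulVec xs) := by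
          rw [Matrix.mulVec_mulVec, dotProduct_comm]
      _ = xs ⬝ᵥ ((Vᵀ * Matrix.diagonal (fun i => (h i - 1) * (h i - 1)) * V).mulVec xs) := by
          rw [hsym, hA, key]
      _ = ∑ i, ((h i - 1) * (h i - 1)) * (v i ⬝ᵥ xs) ^ 2 := quad _ _
  -- row sums of eigenvectors i ≠ 0 vanish
  have hsqrtn : Real.sqrt n ≠ 0 := by
    have : (0 : ℝ) < n := by positivity
    positivity
  have hsum0 : ∀ i : Fin n, i ≠ 0 → ∑ j, v i j = 0 := by
    intro i hi
    have h0 := horth i 0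
    rw [hv0] at h0
    simp only [dotProduct, hi, if_false] at h0
    have : (∑ j, v i j) * (1 / Real.sqrt n) = 0 := by
      rw [Finset.sum_mul]; exact h0
    rcases mul_eq_zero.mp this with h' | h'
    · exact h'
    · exact absurd h' (by simp [hsqrtn])
  have hdot : ∀ i : Fin n, i ≠ 0 →
      v i ⬝ᵥ (xs - ((∑ j, xs j) / (n : ℝ)) • fun _ => (1 : ℝ)) = v i ⬝ᵥ xs := by
    intro i hi
    simp only [dotProduct, Pi.sub_apply, Pi.smul_apply, smul_eq_mul, mul_one,
      mul_sub, Finset.sum_sub_distrib]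
    rw [← Finset.sum_mul, hsum0 i hi, zero_mul, sub_zero]
  -- covariance matrix diagonalization
  have hSigma : (∑ i, σ i ^ 2 • vecMulVec (v i) (v i))
      = Vᵀ * Matrix.diagonal (fun i => σ i ^ 2) * V := by
    ext j k
    rw [Matrix.mul_assoc, Matrix.mul_apply]
    simp only [Matrix.sum_apply, Matrix.smul_apply, vecMulVec_apply, smul_eq_mul,
      Matrix.diagonal_mul, Matrix.transpose_apply, Matrix.of_apply, hV]
    exact Finset.sum_congr rfl fun i _ => by ring
  have hH2 : ((1 + α • L)⁻¹) ^ 2 = Vᵀ * Matrix.diagonal (fun i => h i * h i) * V := by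
    rw [sq, hinv, key]
  have htr : (((1 + α • L)⁻¹ ^ 2) * (∑ i, σ i ^ 2 • vecMulVec (v i) (v i))).trace
      = ∑ i, (h i * h i) * σ i ^ 2 := by
    rw [hH2, hSigma, key, Matrix.trace_mul_cycle, hVVt, Matrix.one_mul,
      Matrix.trace_diagonal]
  rw [hbias, htr]
  have hterm0 : (h 0 - 1) * (h 0 - 1) * (v 0 ⬝ᵥ xs) ^ 2 = 0 := by
    have h01 : h 0 = 1 := by simp [hh, hev0]
    rw [h01]; ring
  have hsplit : (∑ i, (h i - 1) * (h i - 1) * (v i ⬝ᵥ xs) ^ 2)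
      = ∑ i ∈ Finset.univ.erase 0, (h i - 1) * (h i - 1) * (v i ⬝ᵥ xs) ^ 2 :=
    (Finset.sum_erase (f := fun i => (h i - 1) * (h i - 1) * (v i ⬝ᵥ xs) ^ 2)
      (a := 0) Finset.univ hterm0).symm
  rw [hsplit]
  congr 1
  · refine Finset.sum_congr rfl fun i hi => ?_
    have hi0 : i ≠ 0 := Finset.ne_of_mem_erase hi
    rw [hdot i hi0]
    have hq : (h i - 1) * (h i - 1) = (1 - 1 / (1 + α * ev i)) ^ 2 := by
      simp only [hh]; ring
    rw [hq]
  · refine Finset.sum_congr rfl fun i _ => ?_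
    simp only [hh]; ring
end

section
/- Let n ≥ 2, let L be a real symmetric positive semidefinite n×n matrix with eigenvalues 0 = λ₁ ≤ λ₂ ≤ … ≤ λₙ, λ₂ > 0, and orthonormal eigenvectors v₁, …, vₙ where v₁ = (1/√n)·1ₙ; let α > 0, hᵢ = 1/(1 + αλᵢ), qᵢ = 1 − hᵢ, σᵢ ≥ 0, and let T ≥ 1 be a natural number. Then for every x* ∈ ℝⁿ, with x̄* = x* − ((1ₙᵀx*)/n)·1ₙ, the mean squared error of the estimator built from the average of T i.i.d. observations satisfies Σᵢ₌₂ⁿ qᵢ² (vᵢᵀ x̄*)² + (1/T)·Σᵢ₌₁ⁿ hᵢ² σᵢ² ≤ (1/(1 + 1/(αλₙ)))² · Σᵢ₌₂ⁿ (vᵢᵀ x̄*)² + (1/(1 + αλ₂))² · (Σᵢ₌₂ⁿ σᵢ²)/T + σ₁². -/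
open Matrix

/-- MSE-UB bound for the average of `T` i.i.d. observations: the
variance term is divided by `T`. -/
theorem stmt_16 (n : ℕ) [NeZero n] (hn : 2 ≤ n)
    (L : Matrix (Fin n) (Fin n) ℝ) (hL : L.IsSymm)
    (hpsd : ∀ x : Fin n → ℝ, 0 ≤ x ⬝ᵥ L.mulVec x)
    (ev : Fin n → ℝ) (v : Fin n → Fin n → ℝ)
    (hev0 : ev 0 = 0) (hmono : Monotone ev) (hev1 : 0 < ev 1)
    (heig : ∀ i, L.mulVec (v i) = ev i • v i)
    (horth : ∀ i j, v i ⬝ᵥ v j = if i = j then (1 : ℝ) else 0)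
    (hv0 : v 0 = fun _ => 1 / Real.sqrt n)
    (α : ℝ) (hα : 0 < α)
    (σ : Fin n → ℝ) (hσ : ∀ i, 0 ≤ σ i)
    (T : ℕ) (hT : 1 ≤ T) (xs : Fin n → ℝ) :
    (∑ i ∈ Finset.univ.erase 0,
        (1 - 1 / (1 + α * ev i)) ^ 2 *
          (v i ⬝ᵥ (xs - ((∑ j, xs j) / (n : ℝ)) • fun _ => (1 : ℝ))) ^ 2)
      + (1 / (T : ℝ)) * ∑ i, (1 / (1 + α * ev i)) ^ 2 * σ i ^ 2
    ≤ (1 / (1 + 1 / (α * ev ⟨n - 1, by omega⟩))) ^ 2 *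
        (∑ i ∈ Finset.univ.erase 0,
          (v i ⬝ᵥ (xs - ((∑ j, xs j) / (n : ℝ)) • fun _ => (1 : ℝ))) ^ 2)
      + (1 / (1 + α * ev 1)) ^ 2 * ((∑ i ∈ Finset.univ.erase 0, σ i ^ 2) / (T : ℝ))
      + σ 0 ^ 2 := by
  have hTpos : (0:ℝ) < T := by exact_mod_cast Nat.lt_of_lt_of_le Nat.zero_lt_one hT
  have hT1 : (1:ℝ) ≤ T := by exact_mod_cast hT
  have hone : ∀ i : Fin n, i ≠ 0 → ev 1 ≤ ev i := by
    intro i hi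
    apply hmono
    rw [Fin.le_def]
    have h1 : ((1 : Fin n) : ℕ) = 1 := by rw [Fin.val_one']; exact Nat.mod_eq_of_lt (by omega)
    have h2 : (i : ℕ) ≠ 0 := fun h => hi (Fin.ext (by simp [h]))
    omega
  set M := ev ⟨n - 1, by omega⟩ with hM
  have hMle : ∀ i : Fin n, ev i ≤ M := by
    intro i
    apply hmono
    rw [Fin.le_def]
    have := i.isLt
    simp
    omega
  have hMpos : 0 < M := lt_of_lt_of_le hev1 (hMle 1)
  set w := xs - ((∑ j, xs j) / (n : ℝ)) • fun _ => (1 : ℝ) with hw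
  -- bias term
  have hbias : ∑ i ∈ Finset.univ.erase 0,
      (1 - 1 / (1 + α * ev i)) ^ 2 * (v i ⬝ᵥ w) ^ 2
      ≤ (1 / (1 + 1 / (α * M))) ^ 2 * ∑ i ∈ Finset.univ.erase 0, (v i ⬝ᵥ w) ^ 2 := by
    rw [Finset.mul_sum]
    apply Finset.sum_le_sum
    intro i hi
    have hi0 : i ≠ 0 := Finset.ne_of_mem_erase hi
    have hipos : 0 < ev i := lt_of_lt_of_le hev1 (hone i hi0)
    have hile : ev i ≤ M := hMle i
    have h1 : (0:ℝ) < 1 + α * ev i := by positivity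
    have h2 : (0:ℝ) < 1 + α * M := by positivity
    have h3 : (0:ℝ) < α * M := by positivity
    apply mul_le_mul_of_nonneg_right _ (sq_nonneg _)
    have e1 : 1 - 1 / (1 + α * ev i) = (α * ev i) / (1 + α * ev i) := by
      field_simp
      ring
    have e2 : 1 / (1 + 1 / (α * M)) = (α * M) / (1 + α * M) := by
      rw [div_eq_div_iff (by positivity) h2.ne']
      field_simp
      ring
    rw [e1, e2]
    have hb : (α * ev i) / (1 + α * ev i) ≤ (α * M) / (1 + α * M) := by
      rw [div_le_div_iff₀ h1 h2]
      nlinarith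
    have hnn : 0 ≤ (α * ev i) / (1 + α * ev i) := by positivity
    exact pow_le_pow_left₀ hnn hb 2
  -- variance term
  have hvar : (1 / (T : ℝ)) * ∑ i, (1 / (1 + α * ev i)) ^ 2 * σ i ^ 2
      ≤ (1 / (1 + α * ev 1)) ^ 2 * ((∑ i ∈ Finset.univ.erase 0, σ i ^ 2) / (T : ℝ))
        + σ 0 ^ 2 := by
    rw [← Finset.add_sum_erase Finset.univ _ (Finset.mem_univ 0)]
    have h0 : (1 / (1 + α * ev 0)) ^ 2 * σ 0 ^ 2 = σ 0 ^ 2 := by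
      rw [hev0]; norm_num
    rw [h0, mul_add]
    have hA : (1 / (T : ℝ)) * σ 0 ^ 2 ≤ σ 0 ^ 2 := by
      have hle : 1 / (T : ℝ) ≤ 1 := by rw [div_le_one hTpos]; exact hT1
      nlinarith [sq_nonneg (σ 0)]
    have hB : ∑ i ∈ Finset.univ.erase 0, (1 / (1 + α * ev i)) ^ 2 * σ i ^ 2
        ≤ (1 / (1 + α * ev 1)) ^ 2 * ∑ i ∈ Finset.univ.erase 0, σ i ^ 2 := by
      rw [Finset.mul_sum]
      apply Finset.sum_le_sum
      intro i hi
      have hi0 : i ≠ 0 := Finset.ne_of_mem_erase hi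
      have h1i : ev 1 ≤ ev i := hone i hi0
      have h1 : (0:ℝ) < 1 + α * ev 1 := by positivity
      have h2 : (0:ℝ) < 1 + α * ev i := by linarith [mul_le_mul_of_nonneg_left h1i hα.le]
      apply mul_le_mul_of_nonneg_right _ (sq_nonneg _)
      have : 1 / (1 + α * ev i) ≤ 1 / (1 + α * ev 1) := by
        apply one_div_le_one_div_of_le h1
        nlinarith
      exact pow_le_pow_left₀ (by positivity) this 2
    calc (1 / (T : ℝ)) * σ 0 ^ 2 + (1 / (T : ℝ)) * ∑ i ∈ Finset.univ.erase 0, (1 / (1 + α * ev i)) ^ 2 * σ i ^ 2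
        ≤ σ 0 ^ 2 + (1 / (T : ℝ)) * ((1 / (1 + α * ev 1)) ^ 2 * ∑ i ∈ Finset.univ.erase 0, σ i ^ 2) := by
          apply add_le_add hA
          apply mul_le_mul_of_nonneg_left hB (by positivity)
      _ = (1 / (1 + α * ev 1)) ^ 2 * ((∑ i ∈ Finset.univ.erase 0, σ i ^ 2) / (T : ℝ)) + σ 0 ^ 2 := by
          ring
  linarith
end

section
/- Let n ≥ 2, let L be a real symmetric positive semidefinite n×n matrix with eigenvalues 0 = λ₁ ≤ λ₂ ≤ … ≤ λₙ, λ₂ > 0, and orthonormal eigenvectors v₁, …, vₙ where v₁ = (1/√n)·1ₙ; let α > 0, hᵢ = 1/(1 + αλᵢ), qᵢ = 1 − hᵢ, and σᵢ ≥ 0. Suppose the ground-truth signal is band-limited: x* = Σ_{j ∈ A} ωⱼ vⱼ for some subset A ⊆ {1, …, n} and real coefficients ωⱼ. Then Σᵢ₌₂ⁿ qᵢ² (vᵢᵀ x̄*)² + Σᵢ₌₁ⁿ hᵢ² σᵢ² ≤ (1/(1 + 1/(αλₙ)))² · Σ_{j ∈ A, j ≠ 1} ωⱼ² + (1/(1 +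 αλ₂))² · Σᵢ₌₂ⁿ σᵢ² + σ₁², where x̄* = x* − ((1ₙᵀx*)/n)·1ₙ. In particular the coefficient ω₁ of the constant eigenvector v₁ does not contribute to the bound. -/
open Matrix

/-- MSE-UB bound for band-limited graph signals
`x* = Σ_{j ∈ A} ωⱼ vⱼ`; the coefficient `ω₁` of the constant eigenvector does not
contribute to the bound. -/
theorem stmt_17 (n : ℕ) [NeZero n] (hn : 2 ≤ n)
    (L : Matrix (Fin n) (Fin n) ℝ) (hL : L.IsSymm)
    (hpsd : ∀ x : Fin n → ℝ, 0 ≤ x ⬝ᵥ L.mulVec x)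
    (ev : Fin n → ℝ) (v : Fin n → Fin n → ℝ)
    (hev0 : ev 0 = 0) (hmono : Monotone ev) (hev1 : 0 < ev 1)
    (heig : ∀ i, L.mulVec (v i) = ev i • v i)
    (horth : ∀ i j, v i ⬝ᵥ v j = if i = j then (1 : ℝ) else 0)
    (hv0 : v 0 = fun _ => 1 / Real.sqrt n)
    (α : ℝ) (hα : 0 < α)
    (σ : Fin n → ℝ) (hσ : ∀ i, 0 ≤ σ i)
    (A : Finset (Fin n)) (ω : Fin n → ℝ) (xs : Fin n → ℝ)
    (hxs : xs = ∑ j ∈ A, ω j • v j) :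
    (∑ i ∈ Finset.univ.erase 0,
        (1 - 1 / (1 + α * ev i)) ^ 2 *
          (v i ⬝ᵥ (xs - ((∑ j, xs j) / (n : ℝ)) • fun _ => (1 : ℝ))) ^ 2)
      + ∑ i, (1 / (1 + α * ev i)) ^ 2 * σ i ^ 2
    ≤ (1 / (1 + 1 / (α * ev ⟨n - 1, by omega⟩))) ^ 2 *
        (∑ j ∈ A.erase 0, ω j ^ 2)
      + (1 / (1 + α * ev 1)) ^ 2 * (∑ i ∈ Finset.univ.erase 0, σ i ^ 2)
      + σ 0 ^ 2 := by
  have hn1 : (1 : ℕ) < n := hn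
  set last : Fin n := ⟨n - 1, by omega⟩ with hlast
  have hval1 : (1 : Fin n).val = 1 := by
    simp [Fin.val_one', Nat.mod_eq_of_lt hn1]
  have hev_nonneg : ∀ i : Fin n, 0 ≤ ev i := fun i =>
    hev0 ▸ hmono (by rw [Fin.le_def]; simp)
  have hpos : ∀ i : Fin n, 0 < 1 + α * ev i := fun i => by
    nlinarith [mul_nonneg hα.le (hev_nonneg i)]
  have h1le : ∀ i : Fin n, i ≠ 0 → ev 1 ≤ ev i := by
    intro i hi
    apply hmono
    rw [Fin.le_def, hval1]
    have : i.val ≠ 0 := fun h => hi (Fin.ext (by simp [h]))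
    omega
  have hlastle : ∀ i : Fin n, ev i ≤ ev last := fun i =>
    hmono (by rw [Fin.le_def]; have := i.isLt; simp [hlast]; omega)
  have hevlast : 0 < ev last := lt_of_lt_of_le hev1 (h1le last (by
    intro h
    have := congrArg Fin.val h
    simp [hlast] at this
    omega))
  -- sum of entries of v i is zero for i ≠ 0
  have hsum0 : ∀ i : Fin n, i ≠ 0 → (∑ j, v i j) = 0 := by
    intro i hi
    have h := horth i 0
    rw [hv0, if_neg hi] at h
    simp only [dotProduct] at h
    rw [← Finset.sum_mul] at h
    have hsn : (1 / Real.sqrt n) ≠ 0 := by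
      have : (0:ℝ) < Real.sqrt n := Real.sqrt_pos.mpr (by positivity)
      positivity
    exact (mul_eq_zero.mp h).resolve_right hsn
  -- dot product with centered signal
  have hdot : ∀ i : Fin n, i ≠ 0 →
      v i ⬝ᵥ (xs - ((∑ j, xs j) / (n : ℝ)) • fun _ => (1 : ℝ))
        = if i ∈ A then ω i else 0 := by
    intro i hi
    have h1 : v i ⬝ᵥ (xs - ((∑ j, xs j) / (n : ℝ)) • fun _ => (1 : ℝ))
        = v i ⬝ᵥ xs - (∑ j, v i j) * ((∑ j, xs j) / (n : ℝ)) := by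
      simp only [dotProduct, Pi.sub_apply, Pi.smul_apply, smul_eq_mul, mul_one,
        mul_sub]
      rw [Finset.sum_sub_distrib, ← Finset.sum_mul]
    rw [h1, hsum0 i hi, zero_mul, sub_zero, hxs]
    have h2 : v i ⬝ᵥ (∑ j ∈ A, ω j • v j) = ∑ j ∈ A, ω j * (v i ⬝ᵥ v j) := by
      simp only [dotProduct, Finset.sum_apply, Pi.smul_apply, smul_eq_mul,
        Finset.mul_sum]
      rw [Finset.sum_comm]
      refine Finset.sum_congr rfl fun j _ => ?_
      exact Finset.sum_congr rfl fun x _ => by ring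
    rw [h2]
    simp only [horth, mul_ite, mul_one, mul_zero]
    exact Finset.sum_ite_eq A i ω
  -- abbreviations
  set qmax : ℝ := 1 / (1 + 1 / (α * ev last)) with hq
  have hαlast : 0 < α * ev last := mul_pos hα hevlast
  have hqmax : qmax = α * ev last / (1 + α * ev last) := by
    rw [hq]
    field_simp
    ring
  -- first sum bound
  have hS1 : (∑ i ∈ Finset.univ.erase 0,
      (1 - 1 / (1 + α * ev i)) ^ 2 *
        (v i ⬝ᵥ (xs - ((∑ j, xs j) / (n : ℝ)) • fun _ => (1 : ℝ))) ^ 2)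
      ≤ qmax ^ 2 * ∑ j ∈ A.erase 0, ω j ^ 2 := by
    have hrw : ∀ i ∈ Finset.univ.erase (0 : Fin n),
        (1 - 1 / (1 + α * ev i)) ^ 2 *
          (v i ⬝ᵥ (xs - ((∑ j, xs j) / (n : ℝ)) • fun _ => (1 : ℝ))) ^ 2
        = (1 - 1 / (1 + α * ev i)) ^ 2 * (if i ∈ A then ω i else 0) ^ 2 := by
      intro i hi
      rw [hdot i (Finset.ne_of_mem_erase hi)]
    rw [Finset.sum_congr rfl hrw]
    have hbound : ∀ i ∈ Finset.univ.erase (0 : Fin n),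
        (1 - 1 / (1 + α * ev i)) ^ 2 * (if i ∈ A then ω i else 0) ^ 2
        ≤ qmax ^ 2 * (if i ∈ A then ω i ^ 2 else 0) := by
      intro i hi
      have hq_i : 0 ≤ 1 - 1 / (1 + α * ev i) := by
        have := hpos i
        have h1 : 1 / (1 + α * ev i) ≤ 1 := by
          rw [div_le_one this]
          nlinarith [mul_nonneg hα.le (hev_nonneg i)]
        linarith
      have hq_le : 1 - 1 / (1 + α * ev i) ≤ qmax := by
        rw [hqmax]
        have hpi := hpos i
        have hle : α * ev i ≤ α * ev last :=
          mul_le_mul_of_nonneg_left (hlastle i) hα.le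
        rw [sub_le_iff_le_add, div_add_div _ _ (ne_of_gt (by linarith : (0:ℝ) < 1 + α * ev last)) (ne_of_gt hpi)]
        rw [le_div_iff₀ (by positivity)]
        nlinarith
      by_cases hiA : i ∈ A
      · simp only [hiA, if_true]
        have : (1 - 1 / (1 + α * ev i)) ^ 2 ≤ qmax ^ 2 := by
          nlinarith
        nlinarith [sq_nonneg (ω i)]
      · simp [hiA]
    refine le_trans (Finset.sum_le_sum hbound) ?_
    rw [← Finset.mul_sum]
    apply le_of_eq
    congr 1
    rw [Finset.sum_ite_mem]
    congr 1
    ext j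
    simp [Finset.mem_erase, and_comm]
  -- second sum
  have hS2 : (∑ i, (1 / (1 + α * ev i)) ^ 2 * σ i ^ 2)
      ≤ (1 / (1 + α * ev 1)) ^ 2 * (∑ i ∈ Finset.univ.erase 0, σ i ^ 2) + σ 0 ^ 2 := by
    rw [← Finset.add_sum_erase _ _ (Finset.mem_univ (0 : Fin n))]
    have h0 : (1 / (1 + α * ev 0)) ^ 2 * σ 0 ^ 2 = σ 0 ^ 2 := by
      rw [hev0]; norm_num
    rw [h0, Finset.mul_sum, add_comm]
    apply add_le_add_left
    apply Finset.sum_le_sum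
    intro i hi
    have hi0 := Finset.ne_of_mem_erase hi
    have hle := h1le i hi0
    have h1p := hpos (1 : Fin n)
    have hip := hpos i
    have : 1 / (1 + α * ev i) ≤ 1 / (1 + α * ev 1) := by
      apply one_div_le_one_div_of_le h1p
      nlinarith
    have hnn : 0 ≤ 1 / (1 + α * ev i) := by positivity
    have hsq : (1 / (1 + α * ev i)) ^ 2 ≤ (1 / (1 + α * ev 1)) ^ 2 := by
      nlinarith
    exact mul_le_mul_of_nonneg_right hsq (sq_nonneg _)
  calc _ ≤ qmax ^ 2 * (∑ j ∈ A.erase 0, ω j ^ 2)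
        + ((1 / (1 + α * ev 1)) ^ 2 * (∑ i ∈ Finset.univ.erase 0, σ i ^ 2) + σ 0 ^ 2) :=
      add_le_add hS1 hS2
    _ = _ := by rw [hq, hlast]; ring
end
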